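/- Let n ≥ 1, let Z be a closed subset of Euclidean n-space (EuclideanSpace ℝ (Fin n)) whose Hausdorff dimension is strictly less than n − 1, and let U be a nonempty open connected subset of Euclidean n-space. Then U \ Z is path connected. -/

import Mathlib

open ENNReal

open NNReal Set MeasureTheory EMetric Filter

lemma exists_cover_of_hm_zero {X : Type*} [EMetricSpace X] [MeasurableSpace X] [BorelSpace X]
    {d : ℝ} (hd : 0 < d) {A : Set X} (hA : μH[d] A = 0) {r : ℝ≥0∞} (hr : 0 < r) {ε : ℝ≥0∞}
    (hε : 0 < ε) :
    ∃ t : ℕ → Set X, (A ⊆ ⋃ n, t n) ∧ (∀ n, diam (t n) ≤ r) ∧ ∑' n, diam (t n) ^ d < ε := by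
  have h := (MeasureTheory.Measure.hausdorffMeasure_apply d A).symm.trans hA
  have h3 : (⨅ (t : ℕ → Set X) (_ : A ⊆ ⋃ n, t n) (_ : ∀ n, diam (t n) ≤ r),
      ∑' n, ⨆ _ : (t n).Nonempty, diam (t n) ^ d) < ε := by
    refine lt_of_le_of_lt (le_trans ?_ h.le) hε
    exact le_iSup₂ (f := fun (r : ℝ≥0∞) (_ : 0 < r) => ⨅ (t : ℕ → Set X) (_ : A ⊆ ⋃ n, t n)
      (_ : ∀ n, diam (t n) ≤ r), ∑' n, ⨆ _ : (t n).Nonempty, diam (t n) ^ d) r hr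
  simp only [iInf_lt_iff] at h3
  obtain ⟨t, h1, h2', h3'⟩ := h3
  refine ⟨t, h1, h2', lt_of_le_of_lt (ENNReal.tsum_le_tsum fun n => ?_) h3'⟩
  rcases eq_empty_or_nonempty (t n) with he | hne
  · simp [he, EMetric.diam, Metric.ediam_empty, ENNReal.zero_rpow_of_pos hd]
  · simp [hne]

lemma diam_prod_le {X Y : Type*} [PseudoEMetricSpace X] [PseudoEMetricSpace Y]
    (s : Set X) (t : Set Y) : diam (s ×ˢ t) ≤ max (diam s) (diam t) := by
  refine diam_le fun p hp q hq => ?_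
  rw [Prod.edist_eq]
  exact max_le_max (edist_le_diam_of_mem hp.1 hq.1) (edist_le_diam_of_mem hp.2 hq.2)

lemma hm_prod_Icc_zero {X : Type*} [EMetricSpace X] [MeasurableSpace X] [BorelSpace X]
    [SecondCountableTopology X] {A : Set X} {s : ℝ} (hs : 0 < s) (hA : μH[s] A = 0)
    (a b : ℝ) : μH[s + 1] (A ×ˢ Icc a b) = 0 := by
  rcases lt_or_ge b a with hba | hab
  · rw [Set.Icc_eq_empty_of_lt hba, Set.prod_empty, measure_empty]
  have h2pos : ∀ k : ℕ, (0:ℝ) < 2⁻¹ ^ k := fun k => pow_pos (by norm_num) k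
  have hcov : ∀ k : ℕ, ∃ t : ℕ → Set X, (A ⊆ ⋃ n, t n) ∧
      (∀ n, diam (t n) ≤ ENNReal.ofReal (2⁻¹ ^ k)) ∧
      ∑' n, diam (t n) ^ s < ENNReal.ofReal (2⁻¹ ^ k) := fun k =>
    exists_cover_of_hm_zero hs hA (ENNReal.ofReal_pos.2 (h2pos k)) (ENNReal.ofReal_pos.2 (h2pos k))
  choose T hTcov hTdiam hTsum using hcov
  set c : ℕ → ℕ → ℝ := fun k n => max (diam (T k n)).toReal (2⁻¹ ^ (k + n)) with hc
  have hcpos : ∀ k n, 0 < c k n := fun k n => lt_max_of_lt_right (h2pos (k + n))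
  have hTne : ∀ k n, diam (T k n) ≠ ⊤ := fun k n =>
    ((hTdiam k n).trans_lt ENNReal.ofReal_lt_top).ne
  have hdle : ∀ k n, diam (T k n) ≤ ENNReal.ofReal (c k n) := fun k n => by
    conv_lhs => rw [← ENNReal.ofReal_toReal (hTne k n)]
    exact ENNReal.ofReal_le_ofReal (le_max_left _ _)
  have hcle : ∀ k n, c k n ≤ 2⁻¹ ^ k := fun k n => by
    refine max_le ?_ (pow_le_pow_of_le_one (by norm_num) (by norm_num) (Nat.le_add_right _ _))
    exact ENNReal.toReal_le_of_le_ofReal (h2pos k).le (hTdiam k n)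
  have hcle1 : ∀ k n, c k n ≤ 1 := fun k n =>
    (hcle k n).trans (pow_le_one₀ (by norm_num) (by norm_num))
  set N : ℕ → ℕ → ℕ := fun k n => ⌊(b - a) / c k n⌋₊ + 1 with hN
  set t' : ∀ _ : ℕ, ℕ × ℕ → Set (X × ℝ) := fun k p =>
    if p.2 < N k p.1 then
      (T k p.1) ×ˢ Icc (a + p.2 * c k p.1) (a + (p.2 + 1) * c k p.1) else ∅ with ht'
  have hofk : ∀ k : ℕ, ENNReal.ofReal (2⁻¹ ^ k) = ENNReal.ofReal 2⁻¹ ^ k := fun k =>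
    ENNReal.ofReal_pow (by norm_num) k
  -- diam of pieces
  have hdiam' : ∀ k p, diam (t' k p) ≤ ENNReal.ofReal (2⁻¹ ^ k) := by
    intro k ⟨n, j⟩
    simp only [ht']
    split
    · refine (diam_prod_le _ _).trans (max_le ((hTdiam k n)) ?_)
      rw [EMetric.diam, Real.ediam_Icc]
      refine ENNReal.ofReal_le_ofReal ?_
      have := hcle k n; nlinarith [hcpos k n]
    · simp [EMetric.diam]
  -- covering
  have hcov' : ∀ k, A ×ˢ Icc a b ⊆ ⋃ p, t' k p := by
    intro k ⟨x, u⟩ ⟨hx, hu⟩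
    obtain ⟨n, hn⟩ := Set.mem_iUnion.1 (hTcov k hx)
    have hcp := hcpos k n
    set j := ⌊(u - a) / c k n⌋₊ with hj
    have hdivnn : 0 ≤ (u - a) / c k n := div_nonneg (by linarith [hu.1]) hcp.le
    refine Set.mem_iUnion.2 ⟨(n, j), ?_⟩
    have hjN : j < N k n := by
      have : j ≤ ⌊(b - a) / c k n⌋₊ :=
        Nat.floor_le_floor (by gcongr; exact hu.2)
      simpa [hN] using Nat.lt_succ_of_le this
    simp only [ht', if_pos hjN]
    refine ⟨hn, ?_, ?_⟩
    · have h1 : (j : ℝ) ≤ (u - a) / c k n := Nat.floor_le hdivnn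
      have := (le_div_iff₀ hcp).1 h1
      linarith
    · have h1 : (u - a) / c k n < j + 1 := Nat.lt_floor_add_one _
      have := (div_lt_iff₀ hcp).1 h1
      linarith
  refine le_antisymm ?_ zero_le
  refine le_trans (MeasureTheory.Measure.hausdorffMeasure_le_liminf_tsum (l := Filter.atTop) (s+1) _ (fun k => ENNReal.ofReal (2⁻¹ ^ k))
    ?_ t' (Filter.Eventually.of_forall hdiam') (Filter.Eventually.of_forall hcov')) ?_
  · simp only [hofk]
    exact ENNReal.tendsto_pow_atTop_nhds_zero_of_lt_one (ENNReal.ofReal_lt_one.2 (by norm_num))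
  -- now bound the liminf
  set q : ℝ≥0∞ := ENNReal.ofReal (2⁻¹ ^ s) with hq
  have hq1 : q < 1 := ENNReal.ofReal_lt_one.2 (Real.rpow_lt_one (by norm_num) (by norm_num) hs)
  set C : ℝ≥0∞ := (1 - q)⁻¹ with hC
  have hCne : C ≠ ⊤ := ENNReal.inv_ne_top.2 (by simp [tsub_eq_zero_iff_le, hq1.not_ge])
  set B : ℝ≥0∞ := ENNReal.ofReal (b - a + 1) with hB
  set G : ℕ → ℝ≥0∞ := fun k => B * (ENNReal.ofReal (2⁻¹ ^ k) + q ^ k * C) with hG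
  have hFG : ∀ k, (∑' p : ℕ × ℕ, diam (t' k p) ^ (s+1)) ≤ G k := by
    intro k
    rw [ENNReal.tsum_prod']
    have hn1 : ∀ n, (∑' j : ℕ, diam (t' k (n, j)) ^ (s+1)) ≤
        B * (diam (T k n) ^ s + q ^ k * q ^ n) := by
      intro n
      have hcn := hcpos k n
      have hone : ∀ j, diam (t' k (n, j)) ^ (s+1) ≤
          if j < N k n then ENNReal.ofReal (c k n) ^ (s+1) else 0 := by
        intro j
        simp only [ht']
        split
        · refine ENNReal.rpow_le_rpow ?_ (by linarith)
          refine (diam_prod_le _ _).trans (max_le (hdle k n) ?_)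
          rw [EMetric.diam, Real.ediam_Icc]
          refine ENNReal.ofReal_le_ofReal (by ring_nf; nlinarith)
        · simp [EMetric.diam, ENNReal.zero_rpow_of_pos (by linarith : (0:ℝ) < s + 1)]
      refine (ENNReal.tsum_le_tsum hone).trans ?_
      have hsum : (∑' j : ℕ, if j < N k n then ENNReal.ofReal (c k n) ^ (s+1) else 0)
          = (N k n : ℝ≥0∞) * ENNReal.ofReal (c k n) ^ (s+1) := by
        rw [tsum_eq_sum (s := Finset.range (N k n)) (by intro j hj; rw [if_neg (by simpa using hj)])]
        rw [Finset.sum_congr rfl (fun j hj => if_pos (Finset.mem_range.1 hj))]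
        simp [Finset.sum_const, nsmul_eq_mul]
      rw [hsum]
      have hsplit : ENNReal.ofReal (c k n) ^ (s+1)
          = ENNReal.ofReal (c k n) ^ s * ENNReal.ofReal (c k n) := by
        rw [ENNReal.rpow_add s 1 (by simp [ENNReal.ofReal_eq_zero]; nlinarith) ENNReal.ofReal_ne_top,
          ENNReal.rpow_one]
      have h1 : (N k n : ℝ≥0∞) * ENNReal.ofReal (c k n) ≤ B := by
        rw [← ENNReal.ofReal_natCast, ← ENNReal.ofReal_mul (Nat.cast_nonneg _)]
        refine ENNReal.ofReal_le_ofReal ?_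
        have hf : (⌊(b - a) / c k n⌋₊ : ℝ) ≤ (b - a) / c k n :=
          Nat.floor_le (div_nonneg (by linarith) hcn.le)
        have hf2 := (le_div_iff₀ hcn).1 hf
        have := hcle1 k n
        simp only [hN]
        push_cast
        nlinarith
      have h2 : ENNReal.ofReal (c k n) ^ s ≤ diam (T k n) ^ s + q ^ k * q ^ n := by
        rcases max_choice (diam (T k n)).toReal (2⁻¹ ^ (k + n)) with h | h
        · have hval : ENNReal.ofReal (c k n) = diam (T k n) := by
            rw [hc]; simp only []; rw [h, ENNReal.ofReal_toReal (hTne k n)]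
          rw [hval]; exact le_self_add
        · have e1 : ((2:ℝ)⁻¹ ^ (k + n)) ^ s = ((2:ℝ)⁻¹ ^ s) ^ (k + n) := by
            rw [← Real.rpow_natCast (2⁻¹:ℝ) (k + n), ← Real.rpow_natCast ((2:ℝ)⁻¹ ^ s) (k + n),
              ← Real.rpow_mul (by norm_num), ← Real.rpow_mul (by norm_num), mul_comm]
          have hval : ENNReal.ofReal (c k n) ^ s = q ^ (k + n) := by
            rw [hc]; simp only []; rw [h, ENNReal.ofReal_rpow_of_pos (h2pos (k + n)), e1,
              ENNReal.ofReal_pow (Real.rpow_nonneg (by norm_num) s), hq]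
          rw [hval, pow_add]
          exact le_add_self
      calc (N k n : ℝ≥0∞) * ENNReal.ofReal (c k n) ^ (s+1)
          = ((N k n : ℝ≥0∞) * ENNReal.ofReal (c k n)) * ENNReal.ofReal (c k n) ^ s := by
            rw [hsplit]; ring
        _ ≤ B * (diam (T k n) ^ s + q ^ k * q ^ n) := mul_le_mul' h1 h2
    refine (ENNReal.tsum_le_tsum hn1).trans ?_
    rw [ENNReal.tsum_mul_left]
    refine mul_le_mul' le_rfl ?_
    rw [ENNReal.tsum_add, ENNReal.tsum_mul_left, ENNReal.tsum_geometric]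
    exact add_le_add (hTsum k).le le_rfl
  have hBne : B ≠ ⊤ := ENNReal.ofReal_ne_top
  have h1 : Filter.Tendsto (fun k : ℕ => ENNReal.ofReal (2⁻¹ ^ k)) Filter.atTop (nhds 0) := by
    simp only [hofk]
    exact ENNReal.tendsto_pow_atTop_nhds_zero_of_lt_one (ENNReal.ofReal_lt_one.2 (by norm_num))
  have h2 : Filter.Tendsto (fun k : ℕ => q ^ k * C) Filter.atTop (nhds 0) := by
    simpa using ENNReal.Tendsto.mul_const
      (ENNReal.tendsto_pow_atTop_nhds_zero_of_lt_one hq1) (Or.inr hCne)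
  have hGt : Filter.Tendsto G Filter.atTop (nhds 0) := by
    simpa only [zero_add, mul_zero] using ENNReal.Tendsto.const_mul (h1.add h2) (Or.inr hBne)
  refine le_trans (Filter.liminf_le_liminf (Filter.Eventually.of_forall hFG)) ?_
  rw [hGt.liminf_eq]

set_option maxHeartbeats 1000000 in
lemma dimH_bad_le {n : ℕ} {Z : Set (EuclideanSpace ℝ (Fin n))} {s : ℝ≥0} (hs : 0 < (s:ℝ))
    (hZ : μH[(s : ℝ)] Z = 0) {x : EuclideanSpace ℝ (Fin n)} (hx : x ∉ Z) :
    dimH {m : EuclideanSpace ℝ (Fin n) | ∃ t ∈ Icc (0:ℝ) 1, x + t • (m - x) ∈ Z}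
      ≤ ((s : ℝ≥0∞) + 1) := by
  set g : EuclideanSpace ℝ (Fin n) × ℝ → EuclideanSpace ℝ (Fin n) :=
    fun p => x + (p.2)⁻¹ • (p.1 - x) with hg
  set S : ℕ → Set (EuclideanSpace ℝ (Fin n) × ℝ) := fun k =>
    (Z ∩ Metric.closedBall x (k+1)) ×ˢ Icc ((k+1:ℝ))⁻¹ 1 with hS
  have hsub : {m : EuclideanSpace ℝ (Fin n) | ∃ t ∈ Icc (0:ℝ) 1, x + t • (m - x) ∈ Z}
      ⊆ ⋃ k, g '' S k := by
    intro m hm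
    obtain ⟨t, ⟨ht0, ht1⟩, hw⟩ := hm
    have htne : t ≠ 0 := by
      rintro rfl
      simp only [zero_smul, add_zero] at hw
      exact hx hw
    have ht0' : 0 < t := lt_of_le_of_ne ht0 (Ne.symm htne)
    set w : EuclideanSpace ℝ (Fin n) := x + t • (m - x) with hwdef
    set k : ℕ := max ⌈t⁻¹⌉₊ ⌈‖w - x‖⌉₊ with hk
    have hkc1 : t⁻¹ ≤ (k:ℝ) + 1 := by
      calc t⁻¹ ≤ ⌈t⁻¹⌉₊ := Nat.le_ceil _
        _ ≤ (k : ℝ) + 1 := by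
          have : (⌈t⁻¹⌉₊ : ℝ) ≤ (k : ℝ) := by exact_mod_cast le_max_left _ _
          linarith
    refine Set.mem_iUnion.2 ⟨k, ⟨(w, t), ⟨⟨hw, ?_⟩, ?_, ht1⟩, ?_⟩⟩
    · rw [Metric.mem_closedBall, dist_eq_norm]
      calc ‖w - x‖ ≤ ⌈‖w - x‖⌉₊ := Nat.le_ceil _
        _ ≤ (k : ℝ) + 1 := by
          have : (⌈‖w - x‖⌉₊ : ℝ) ≤ (k : ℝ) := by exact_mod_cast le_max_right _ _
          linarith
    · show ((k:ℝ) + 1)⁻¹ ≤ t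
      rw [← inv_inv t]
      exact inv_anti₀ (by positivity) hkc1
    · show x + t⁻¹ • (w - x) = m
      rw [hwdef]
      simp only [add_sub_cancel_left, smul_smul, inv_mul_cancel₀ htne, one_smul]
      abel
  refine le_trans (dimH_mono hsub) ?_
  rw [dimH_iUnion]
  refine iSup_le fun k => ?_
  set K : ℝ≥0 := ((k:ℝ≥0)+1) + ((k:ℝ≥0)+1)^3 with hK
  have hlip : LipschitzOnWith K g ((Metric.closedBall x (k+1)) ×ˢ Icc ((k+1:ℝ))⁻¹ 1) := by
    rw [lipschitzOnWith_iff_dist_le_mul]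
    rintro ⟨w, t⟩ ⟨hwB, htI⟩ ⟨w', t'⟩ ⟨hwB', htI'⟩
    set a : ℝ := (k:ℝ) + 1 with ha
    have ha1 : (1:ℝ) ≤ a := by rw [ha]; have : (0:ℝ) ≤ k := Nat.cast_nonneg k; linarith
    have hainv : 0 < a⁻¹ := by positivity
    have ht0 : 0 < t := lt_of_lt_of_le hainv htI.1
    have ht0' : 0 < t' := lt_of_lt_of_le hainv htI'.1
    have htinv : t⁻¹ ≤ a := by
      rw [← inv_inv a]
      exact inv_anti₀ hainv htI.1
    have hdist : dist (g (w,t)) (g (w',t')) = ‖t⁻¹ • (w - x) - t'⁻¹ • (w' - x)‖ := by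
      rw [hg]; simp only [dist_eq_norm]; congr 1; abel
    have hkey : t⁻¹ • (w - x) - t'⁻¹ • (w' - x)
        = t⁻¹ • (w - w') + (t⁻¹ - t'⁻¹) • (w' - x) := by
      module
    have hb1 : ‖t⁻¹ • (w - w')‖ ≤ a * ‖w - w'‖ := by
      rw [norm_smul, Real.norm_eq_abs, abs_of_pos (by positivity)]
      exact mul_le_mul_of_nonneg_right htinv (norm_nonneg _)
    have hwx' : ‖w' - x‖ ≤ a := by
      have := Metric.mem_closedBall.1 hwB'
      rwa [dist_eq_norm] at this
    have hb2 : ‖(t⁻¹ - t'⁻¹) • (w' - x)‖ ≤ a^3 * |t - t'| := by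
      rw [norm_smul, Real.norm_eq_abs]
      have hdiff : t⁻¹ - t'⁻¹ = (t' - t) / (t * t') := by
        field_simp
      have habs : |t⁻¹ - t'⁻¹| ≤ a^2 * |t - t'| := by
        rw [hdiff, abs_div, abs_mul]
        rw [div_le_iff₀ (by positivity)]
        have h1 : a⁻¹ ≤ |t| := by rw [abs_of_pos ht0]; exact htI.1
        have h2 : a⁻¹ ≤ |t'| := by rw [abs_of_pos ht0']; exact htI'.1
        have h3 : |t' - t| = |t - t'| := abs_sub_comm _ _
        have ha0 : (0:ℝ) < a := by linarith
        have h4 : a⁻¹ * a⁻¹ ≤ |t| * |t'| := mul_le_mul h1 h2 hainv.le (abs_nonneg t)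
        have h5 : a^2 * (a⁻¹ * a⁻¹) = 1 := by field_simp
        have h6 : (1:ℝ) ≤ a^2 * (|t| * |t'|) :=
          h5 ▸ mul_le_mul_of_nonneg_left h4 (sq_nonneg a)
        nlinarith [abs_nonneg (t - t')]
      calc |t⁻¹ - t'⁻¹| * ‖w' - x‖ ≤ (a^2 * |t - t'|) * a := by
            apply mul_le_mul habs hwx' (norm_nonneg _) (by positivity)
        _ = a^3 * |t - t'| := by ring
    have hDw : ‖w - w'‖ ≤ dist (w, t) (w', t') := by
      rw [Prod.dist_eq, dist_eq_norm]
      exact le_max_left _ _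
    have hDt : |t - t'| ≤ dist (w, t) (w', t') := by
      rw [Prod.dist_eq, Real.dist_eq]
      exact le_max_right _ _
    have hDnn : (0:ℝ) ≤ dist (w, t) (w', t') := dist_nonneg
    have hKa : (K : ℝ) = a + a^3 := by rw [hK, ha]; push_cast; ring
    rw [hdist, hkey, hKa]
    calc ‖t⁻¹ • (w - w') + (t⁻¹ - t'⁻¹) • (w' - x)‖
        ≤ ‖t⁻¹ • (w - w')‖ + ‖(t⁻¹ - t'⁻¹) • (w' - x)‖ := norm_add_le _ _
      _ ≤ a * ‖w - w'‖ + a^3 * |t - t'| := add_le_add hb1 hb2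
      _ ≤ a * dist (w, t) (w', t') + a^3 * dist (w, t) (w', t') :=
          add_le_add (mul_le_mul_of_nonneg_left hDw (by positivity))
            (mul_le_mul_of_nonneg_left hDt (by positivity))
      _ = (a + a^3) * dist (w, t) (w', t') := by ring
  have hsubS : S k ⊆ (Metric.closedBall x (k+1)) ×ˢ Icc ((k+1:ℝ))⁻¹ 1 :=
    Set.prod_mono Set.inter_subset_right (subset_refl _)
  refine le_trans ((hlip.mono hsubS).dimH_image_le) ?_
  have hcast : (((s + 1 : ℝ≥0)) : ℝ) = (s:ℝ) + 1 := by push_cast; ring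
  have hzero : μH[((s + 1 : ℝ≥0) : ℝ)] (S k) = 0 := by
    rw [hcast, hS]
    refine hm_prod_Icc_zero hs ?_ _ _
    exact le_antisymm ((measure_mono Set.inter_subset_left).trans hZ.le) zero_le
  have hd := dimH_le_of_hausdorffMeasure_ne_top (d := s + 1) (s := S k) (by rw [hzero]; simp)
  refine hd.trans ?_
  push_cast
  rfl

lemma joinedIn_of_segments {n : ℕ} {Z B : Set (EuclideanSpace ℝ (Fin n))} (hB : Convex ℝ B)
    (hBo : IsOpen B) {s : ℝ≥0} (hs : 0 < (s:ℝ)) (hZ : μH[(s:ℝ)] Z = 0)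
    (hsn : (s : ℝ≥0∞) + 1 < (n : ℝ≥0∞))
    {x y : EuclideanSpace ℝ (Fin n)} (hx : x ∈ B \ Z) (hy : y ∈ B \ Z) :
    JoinedIn (B \ Z) x y := by
  set bad : EuclideanSpace ℝ (Fin n) → Set (EuclideanSpace ℝ (Fin n)) :=
    fun p => {m | ∃ t ∈ Icc (0:ℝ) 1, p + t • (m - p) ∈ Z} with hbad
  have hdx := dimH_bad_le hs hZ hx.2
  have hdy := dimH_bad_le hs hZ hy.2
  have hdense : Dense ((bad x ∪ bad y)ᶜ) := by
    refine dense_compl_of_dimH_lt_finrank ?_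
    rw [dimH_union, finrank_euclideanSpace_fin]
    exact max_lt (hdx.trans_lt hsn) (hdy.trans_lt hsn)
  obtain ⟨m, hmB, hm⟩ := hdense.inter_open_nonempty B hBo ⟨x, hx.1⟩
  rw [Set.mem_compl_iff, Set.mem_union] at hm
  push_neg at hm
  have key : ∀ p : EuclideanSpace ℝ (Fin n), p ∈ B → m ∉ bad p → JoinedIn (B \ Z) p m := by
    intro p hpB hp
    refine ⟨⟨⟨fun t : unitInterval => p + (t:ℝ) • (m - p), by continuity⟩, by simp, by simp⟩,
      fun t => ⟨?_, fun hc => hp ⟨t, t.2, hc⟩⟩⟩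
    have : p + (t:ℝ) • (m - p) ∈ segment ℝ p m := by
      rw [segment_eq_image']
      exact ⟨t, t.2, rfl⟩
    exact hB.segment_subset hpB hmB this
  exact (key x hx.1 hm.1).trans (key y hy.1 hm.2).symm

/-- A nonempty open connected subset of Euclidean n-space remains path
connected after removing a closed set of Hausdorff dimension < n − 1. -/
theorem pathConnected_of_remove_small_closed (n : ℕ) (hn : 1 ≤ n)
    (Z : Set (EuclideanSpace ℝ (Fin n))) (hZc : IsClosed Z)
    (hZd : dimH Z < (n : ℝ≥0∞) - 1)
    (U : Set (EuclideanSpace ℝ (Fin n))) (hUo : IsOpen U)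
    (hUne : U.Nonempty) (hUconn : IsConnected U) :
    IsPathConnected (U \ Z) := by
  classical
  -- choose an exponent s with 0 < s, dimH Z < s, s + 1 < n
  have hn1pos : (0:ℝ≥0∞) < (n:ℝ≥0∞) - 1 := lt_of_le_of_lt zero_le hZd
  have hn1top : ((n:ℝ≥0∞) - 1) ≠ ⊤ := by
    refine ne_top_of_le_ne_top (by simp : ((n:ℝ≥0∞)) ≠ ⊤) tsub_le_self
  have hmaxlt : max (dimH Z) (((n:ℝ≥0∞) - 1) / 2) < (n:ℝ≥0∞) - 1 :=
    max_lt hZd (ENNReal.half_lt_self hn1pos.ne' hn1top)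
  obtain ⟨s, hs1, hs2⟩ := ENNReal.lt_iff_exists_nnreal_btwn.1 hmaxlt
  have hspos : 0 < (s:ℝ) := by
    have h0 : (0:ℝ≥0∞) < (s:ℝ≥0∞) :=
      lt_of_lt_of_le (ENNReal.half_pos hn1pos.ne') ((le_max_right _ _).trans hs1.le)
    exact_mod_cast ENNReal.coe_pos.1 h0
  have hZs : μH[(s:ℝ)] Z = 0 :=
    hausdorffMeasure_of_dimH_lt (lt_of_le_of_lt (le_max_left _ _) hs1)
  have hsn : (s:ℝ≥0∞) + 1 < (n:ℝ≥0∞) := by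
    have h := ENNReal.add_lt_add_right ENNReal.one_ne_top hs2
    rwa [tsub_add_cancel_of_le (by exact_mod_cast hn : (1:ℝ≥0∞) ≤ (n:ℝ≥0∞))] at h
  have hZdense : Dense Zᶜ := by
    refine dense_compl_of_dimH_lt_finrank ?_
    rw [finrank_euclideanSpace_fin]
    exact lt_of_lt_of_le hZd tsub_le_self
  -- local step
  have hball : ∀ (c : EuclideanSpace ℝ (Fin n)) (r : ℝ), Metric.ball c r ⊆ U →
      ∀ p ∈ Metric.ball c r \ Z, ∀ q ∈ Metric.ball c r \ Z, JoinedIn (U \ Z) p q := by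
    intro c r hsub p hp q hq
    exact (joinedIn_of_segments (convex_ball c r) Metric.isOpen_ball hspos hZs hsn hp hq).mono
      (Set.diff_subset_diff_left hsub)
  -- base point
  obtain ⟨x₀, hx₀U, hx₀Z⟩ : ∃ x₀, x₀ ∈ U ∧ x₀ ∉ Z := by
    obtain ⟨x₀, h1, h2⟩ := hZdense.inter_open_nonempty U hUo hUne
    exact ⟨x₀, h1, h2⟩
  set V : Set (EuclideanSpace ℝ (Fin n)) := {x | x ∈ U ∧ ∃ z, z ∈ U \ Z ∧
    JoinedIn (U \ Z) x₀ z ∧ ∃ r : ℝ, 0 < r ∧ Metric.ball x r ⊆ U ∧ z ∈ Metric.ball x r} with hV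
  have hVopen : IsOpen V := by
    rw [Metric.isOpen_iff]
    rintro x ⟨hxU, z, hzUZ, hjoin, r, hr, hballU, hzball⟩
    have hdz : dist z x < r := Metric.mem_ball.1 hzball
    refine ⟨(r - dist z x) / 2, by linarith, ?_⟩
    intro x' hx'
    have hdx' : dist x' x < (r - dist z x) / 2 := Metric.mem_ball.1 hx'
    have hdznn : (0:ℝ) ≤ dist z x := dist_nonneg
    refine ⟨hballU (Metric.mem_ball.2 (by linarith)), z, hzUZ, hjoin,
      dist z x + (r - dist z x) / 2, by linarith, ?_, ?_⟩
    · intro u hu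
      have h1 : dist u x' < dist z x + (r - dist z x) / 2 := Metric.mem_ball.1 hu
      have h2 : dist u x ≤ dist u x' + dist x' x := dist_triangle _ _ _
      exact hballU (Metric.mem_ball.2 (by linarith))
    · have h3 : dist z x' ≤ dist z x + dist x x' := dist_triangle _ _ _
      rw [dist_comm x x'] at h3
      exact Metric.mem_ball.2 (by linarith)
  have hWopen : IsOpen {x | x ∈ U ∧ x ∉ V} := by
    rw [Metric.isOpen_iff]
    rintro x ⟨hxU, hxV⟩
    obtain ⟨r, hr, hballU⟩ := Metric.isOpen_iff.1 hUo x hxU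
    refine ⟨r, hr, ?_⟩
    intro x' hx'
    have hdx' : dist x' x < r := Metric.mem_ball.1 hx'
    refine ⟨hballU hx', fun hx'V => ?_⟩
    obtain ⟨hx'U, z', hz'UZ, hjoin', r', hr', hball'U, hz'ball⟩ := hx'V
    set ρ : ℝ := min r' (r - dist x' x) with hρ
    have hρpos : 0 < ρ := lt_min hr' (by linarith)
    obtain ⟨z, hzball, hzZ⟩ := hZdense.inter_open_nonempty (Metric.ball x' ρ)
      Metric.isOpen_ball ⟨x', Metric.mem_ball_self hρpos⟩
    have hdzx' : dist z x' < ρ := Metric.mem_ball.1 hzball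
    have hzr' : z ∈ Metric.ball x' r' :=
      Metric.mem_ball.2 (lt_of_lt_of_le hdzx' (min_le_left _ _))
    have hjoinz : JoinedIn (U \ Z) x₀ z :=
      hjoin'.trans (hball x' r' hball'U z' ⟨hz'ball, hz'UZ.2⟩ z ⟨hzr', hzZ⟩)
    have hzxr : z ∈ Metric.ball x r := by
      have h1 : dist z x ≤ dist z x' + dist x' x := dist_triangle _ _ _
      have h2 : ρ ≤ r - dist x' x := min_le_right _ _
      exact Metric.mem_ball.2 (by linarith)
    exact hxV ⟨hxU, z, ⟨hballU hzxr, hzZ⟩, hjoinz, r, hr, hballU, hzxr⟩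
  have hx₀V : x₀ ∈ V := by
    obtain ⟨r, hr, hballU⟩ := Metric.isOpen_iff.1 hUo x₀ hx₀U
    exact ⟨hx₀U, x₀, ⟨hx₀U, hx₀Z⟩, JoinedIn.refl ⟨hx₀U, hx₀Z⟩, r, hr, hballU,
      Metric.mem_ball_self hr⟩
  -- connectedness forces U ⊆ V
  have hUV : U ⊆ V := by
    by_contra hc
    obtain ⟨w, hwU, hwV⟩ := Set.not_subset.1 hc
    obtain ⟨p, hpU, hpV, hpW⟩ := hUconn.isPreconnected V {x | x ∈ U ∧ x ∉ V} hVopen hWopen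
      (fun u hu => by by_cases h : u ∈ V; exacts [Or.inl h, Or.inr ⟨hu, h⟩])
      ⟨x₀, hx₀U, hx₀V⟩ ⟨w, hwU, hwU, hwV⟩
    exact hpW.2 hpV
  -- conclude
  refine ⟨x₀, ⟨hx₀U, hx₀Z⟩, ?_⟩
  rintro y ⟨hyU, hyZ⟩
  obtain ⟨-, z, hzUZ, hjoin, r, hr, hballU, hzball⟩ := hUV hyU
  exact (hjoin.trans (hball y r hballU z ⟨hzball, hzUZ.2⟩ y
    ⟨Metric.mem_ball_self hr, hyZ⟩))
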